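/- Let (b_n)_{n≥0} be the integer sequence defined by b_0 = 1, b_1 = −1 and the recursion b_n = −6·b_{n−1} − 25·b_{n−2} for n ≥ 2. Then ∑_{n=0}^∞ b_n/((2n+1)·5^{2n}) = 5π/16. -/

import Mathlib

open Complex Real

theorem sum_b_eq_five_pi_div_sixteen (b : ℕ → ℤ) (hb0 : b 0 = 1) (hb1 : b 1 = -1)
    (hrec : ∀ n : ℕ, 2 ≤ n → b n = -6 * b (n - 1) - 25 * b (n - 2)) :
    (∑' n : ℕ, (b n : ℝ) / ((2 * n + 1) * 5 ^ (2 * n))) = 5 * Real.pi / 16 := by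
  have hIsq := Complex.I_sq
  -- closed form
  have key : ∀ n : ℕ, (b n : ℂ) =
      ((2 - I) * (-3 + 4*I)^n + (2 + I) * (-3 - 4*I)^n) / 4 := by
    intro n
    induction n using Nat.twoStepInduction with
    | zero => rw [hb0]; push_cast; ring_nf
    | one => rw [hb1]; push_cast; simp only [pow_one]; linear_combination 2 * hIsq
    | more n ih0 ih1 =>
      have hr : b (n + 2) = -6 * b (n + 1) - 25 * b n := by
        simpa using hrec (n + 2) (by omega)
      rw [hr]
      push_cast
      rw [ih0, ih1]
      rw [show n + 2 = (n + 1) + 1 from rfl, pow_succ, pow_succ, pow_succ, pow_succ]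
      linear_combination (-4*(2 - I) * (-3 + 4*I)^n - 4*(2 + I) * (-3 - 4*I)^n) * hIsq
  -- norm bound
  have hw : ‖((2 - I)/5 : ℂ)‖ < 1 := by
    rw [norm_div]
    have h1 : ‖(2 - I : ℂ)‖ ≤ 3 := by
      calc ‖(2 - I : ℂ)‖ ≤ ‖(2:ℂ)‖ + ‖I‖ := norm_sub_le _ _
      _ = 3 := by rw [Complex.norm_I]; norm_num
    have h5 : ‖(5:ℂ)‖ = 5 := by norm_num
    rw [h5, div_lt_one (by norm_num)]
    linarith
  have h1 := Complex.hasSum_arctan hw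
  set T := Complex.arctan ((2 - I)/5) with hT
  -- conjugate sum
  have h2 : HasSum (fun n : ℕ => (-1)^n * ((2 + I)/5)^(2*n+1) / ((2*n+1 : ℕ) : ℂ))
      ((starRingEnd ℂ) T) := by
    have := (Complex.hasSum_conj' (f := fun n : ℕ =>
        (-1)^n * ((2 - I)/5)^(2*n+1) / ((2*n+1 : ℕ) : ℂ)) (x := T)).mpr h1
    refine this.congr_fun fun n => ?_
    simp only [map_div₀, map_mul, map_pow, map_neg, map_one, map_ofNat, Complex.conj_I,
      Complex.conj_natCast, map_sub, sub_neg_eq_add]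
  have h3 := (h1.add h2).mul_left (5/4 : ℂ)
  -- pointwise identity
  have hfun : ∀ n : ℕ, (((b n : ℝ) / ((2 * n + 1) * 5 ^ (2 * n)) : ℝ) : ℂ) =
      (5/4 : ℂ) * ((-1)^n * ((2 - I)/5)^(2*n+1) / ((2*n+1 : ℕ) : ℂ)
        + (-1)^n * ((2 + I)/5)^(2*n+1) / ((2*n+1 : ℕ) : ℂ)) := by
    intro n
    have hodd : ∀ z c : ℂ, z^2 = c → (-1:ℂ)^n * z^(2*n+1) = (-c)^n * z := by
      intro z c h
      rw [pow_succ, pow_mul, h, neg_pow c]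
      ring
    have r1 : ((2 - I)/5 : ℂ)^2 = (3 - 4*I)/25 := by
      field_simp
      linear_combination 25 * hIsq
    have r2 : ((2 + I)/5 : ℂ)^2 = (3 + 4*I)/25 := by
      field_simp
      linear_combination 25 * hIsq
    have s1 : ((-((3 - 4*I)/25)) : ℂ)^n = (-3 + 4*I)^n/25^n := by
      rw [show (-((3 - 4*I)/25) : ℂ) = (-3+4*I)/25 by ring, div_pow]
    have s2 : ((-((3 + 4*I)/25)) : ℂ)^n = (-3 - 4*I)^n/25^n := by
      rw [show (-((3 + 4*I)/25) : ℂ) = (-3-4*I)/25 by ring, div_pow]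
    rw [hodd _ _ r1, hodd _ _ r2, s1, s2]
    have h25 : ((25:ℂ))^n ≠ 0 := pow_ne_zero _ (by norm_num)
    have hn1 : ((2*(n:ℂ)+1)) ≠ 0 := by
      have : ((2*n+1 : ℕ) : ℂ) ≠ 0 := Nat.cast_ne_zero.mpr (by omega)
      push_cast at this
      exact this
    have h5n : ((5:ℂ))^(2*n) = 25^n := by rw [pow_mul]; norm_num
    push_cast
    rw [key n, h5n]
    field_simp
  -- argument of 1 + I
  have harg : Complex.arg (1 + I) = π/4 := by
    have h2' : Real.sqrt 2 * Real.sqrt 2 = 2 := Real.mul_self_sqrt (by norm_num)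
    have hrep : (1 + I : ℂ) =
        (Real.sqrt 2 : ℝ) * (Complex.cos ((π/4 : ℝ) : ℂ) + Complex.sin ((π/4 : ℝ) : ℂ) * I) := by
      rw [← Complex.ofReal_cos, ← Complex.ofReal_sin, Real.cos_pi_div_four, Real.sin_pi_div_four]
      apply Complex.ext <;> simp <;> nlinarith [h2']
    rw [hrep, Complex.arg_real_mul _ (by positivity), Complex.arg_cos_add_sin_mul_I
      ⟨by linarith [Real.pi_pos], by linarith [Real.pi_pos]⟩]
  have hne : (1 - ((2 - I)/5) * I : ℂ) ≠ 0 := by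
    intro h
    have := congrArg Complex.re h
    simp [Complex.div_re, Complex.normSq] at this
    norm_num at this
  have hratio : (1 + ((2 - I)/5) * I) / (1 - ((2 - I)/5) * I) = (1 + I : ℂ) := by
    rw [div_eq_iff hne]
    linear_combination (-I/5) * hIsq
  have hre : T.re = π/8 := by
    rw [hT, Complex.arctan, hratio]
    have : (-I/2 * Complex.log (1 + I)).re = (Complex.log (1 + I)).im / 2 := by
      simp [Complex.mul_re, Complex.div_re]
      ring
    rw [this, Complex.log_im, harg]
    ring
  have hval : (5/4 : ℂ) * (T + (starRingEnd ℂ) T) = ((5 * π / 16 : ℝ) : ℂ) := by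
    rw [Complex.add_conj, hre]
    push_cast
    ring
  rw [hval] at h3
  have h4 : HasSum (fun n : ℕ => (((b n : ℝ) / ((2 * n + 1) * 5 ^ (2 * n)) : ℝ) : ℂ))
      ((5 * π / 16 : ℝ) : ℂ) := by
    refine h3.congr_fun fun n => hfun n
  exact (Complex.hasSum_ofReal.mp h4).tsum_eq
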